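/- Newton–Kantorovich-type theorem (radii polynomial approach): Let X, X' be Banach spaces, A† ∈ B(X,X'), A ∈ B(X',X) with A injective, and F : X → X' Fréchet differentiable at ā ∈ X with AF : X → X. Suppose nonnegative constants Y_0, Z_0, Z_1 and a function Z_2 : (0,∞) → (0,∞) satisfy ‖AF(ā)‖_X ≤ Y_0, ‖I − AA†‖_{B(X)} ≤ Z_0, ‖A[DF(ā) − A†]‖_{B(X)} ≤ Z_1, and ‖A[DF(c) − DF(ā)]‖_{B(X)} ≤ Z_2(r)·r for all c in the closed ball B_r(ā) and all r > 0. If there exists r_0 > 0 such that Z_2(r_0)r_0² − (1 − Z_1 − Z_0)r_0 + Y_0 < 0, then there exists a unique ã ∈ B_{r_0}(ā) with F(ã) = 0. -/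

import Mathlib

/-- Newton–Kantorovich-type theorem (radii polynomial approach): if the bounds
`Y₀, Z₀, Z₁, Z₂` satisfy the stated estimates and the radii polynomial is
negative at some `r₀ > 0`, then `F` has a unique zero in the closed ball
`B_{r₀}(ā)`. -/
theorem stmt_6 {X X' : Type*}
    [NormedAddCommGroup X] [NormedSpace ℝ X] [CompleteSpace X]
    [NormedAddCommGroup X'] [NormedSpace ℝ X']
    (F : X → X') (DF : X → X →L[ℝ] X')
    (hDF : ∀ c : X, HasFDerivAt F (DF c) c)
    (Adag : X →L[ℝ] X') (A : X' →L[ℝ] X)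
    (hAinj : Function.Injective A)
    (abar : X) (Y₀ Z₀ Z₁ : ℝ) (Z₂ : ℝ → ℝ)
    (hY₀ : 0 ≤ Y₀) (hZ₀ : 0 ≤ Z₀) (hZ₁ : 0 ≤ Z₁)
    (hZ₂pos : ∀ r : ℝ, 0 < r → 0 < Z₂ r)
    (hY : ‖A (F abar)‖ ≤ Y₀)
    (hZ0 : ‖ContinuousLinearMap.id ℝ X - A.comp Adag‖ ≤ Z₀)
    (hZ1 : ‖A.comp (DF abar - Adag)‖ ≤ Z₁)
    (hZ2 : ∀ r : ℝ, 0 < r → ∀ c ∈ Metric.closedBall abar r,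
      ‖A.comp (DF c - DF abar)‖ ≤ Z₂ r * r)
    (r₀ : ℝ) (hr₀ : 0 < r₀)
    (hp : Z₂ r₀ * r₀ ^ 2 - (1 - Z₁ - Z₀) * r₀ + Y₀ < 0) :
    ∃! a : X, a ∈ Metric.closedBall abar r₀ ∧ F a = 0 := by
  set κ : ℝ := Z₀ + Z₁ + Z₂ r₀ * r₀ with hκdef
  have hZ₂r : 0 < Z₂ r₀ := hZ₂pos r₀ hr₀
  have hκ0 : 0 ≤ κ := by positivity
  have hκY : κ * r₀ + Y₀ < r₀ := by nlinarith
  have hκ1 : κ < 1 := by nlinarith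
  set g : X → X := fun x => x - A (F x) with hg
  have hgderiv : ∀ c : X,
      HasFDerivAt g (ContinuousLinearMap.id ℝ X - A.comp (DF c)) c := by
    intro c
    exact (hasFDerivAt_id c).sub (A.hasFDerivAt.comp c (hDF c))
  have hnorm : ∀ c ∈ Metric.closedBall abar r₀,
      ‖ContinuousLinearMap.id ℝ X - A.comp (DF c)‖ ≤ κ := by
    intro c hc
    have heq : ContinuousLinearMap.id ℝ X - A.comp (DF c)
        = ((ContinuousLinearMap.id ℝ X - A.comp Adag) - A.comp (DF abar - Adag))
          - A.comp (DF c - DF abar) := by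
      ext x
      simp [ContinuousLinearMap.comp_apply, map_sub]
    rw [heq]
    have h1 := norm_sub_le ((ContinuousLinearMap.id ℝ X - A.comp Adag) - A.comp (DF abar - Adag))
      (A.comp (DF c - DF abar))
    have h2 := norm_sub_le (ContinuousLinearMap.id ℝ X - A.comp Adag) (A.comp (DF abar - Adag))
    have h3 := hZ2 r₀ hr₀ c hc
    linarith
  have hlip : ∀ x ∈ Metric.closedBall abar r₀, ∀ y ∈ Metric.closedBall abar r₀,
      ‖g y - g x‖ ≤ κ * ‖y - x‖ := by
    intro x hx y hy
    exact Convex.norm_image_sub_le_of_norm_hasFDerivWithin_le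
      (fun c hc => (hgderiv c).hasFDerivWithinAt) hnorm (convex_closedBall _ _) hx hy
  have hgabar : g abar - abar = -(A (F abar)) := by simp [hg]
  have hmaps : ∀ x ∈ Metric.closedBall abar r₀, g x ∈ Metric.closedBall abar r₀ := by
    intro x hx
    rw [Metric.mem_closedBall, dist_eq_norm]
    have hxball : ‖x - abar‖ ≤ r₀ := by
      rw [← dist_eq_norm]; exact hx
    have h1 : ‖g x - abar‖ ≤ ‖g x - g abar‖ + ‖g abar - abar‖ := by
      have := norm_add_le (g x - g abar) (g abar - abar)
      simpa using this
    have h2 : ‖g x - g abar‖ ≤ κ * ‖x - abar‖ :=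
      hlip abar (Metric.mem_closedBall_self hr₀.le) x hx
    have h3 : ‖g abar - abar‖ ≤ Y₀ := by rw [hgabar, norm_neg]; exact hY
    nlinarith [norm_nonneg (x - abar)]
  have hne : (Metric.closedBall abar r₀).Nonempty := ⟨abar, Metric.mem_closedBall_self hr₀.le⟩
  haveI : Nonempty (Metric.closedBall abar r₀) := hne.to_subtype
  haveI : CompleteSpace (Metric.closedBall abar r₀) :=
    Metric.isClosed_closedBall.completeSpace_coe
  set T : Metric.closedBall abar r₀ → Metric.closedBall abar r₀ :=
    fun x => ⟨g x, hmaps x x.2⟩ with hT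
  have hcontr : ContractingWith ⟨κ, hκ0⟩ T := by
    constructor
    · exact_mod_cast hκ1
    · apply LipschitzWith.of_dist_le_mul
      intro x y
      have := hlip y y.2 x x.2
      have h' : dist (T x) (T y) ≤ κ * dist x y := by
        simpa [hT, Subtype.dist_eq, dist_eq_norm] using this
      exact h'
  obtain ⟨a, ha⟩ := hcontr.exists_fixedPoint (Nonempty.some ‹_›) (by
    exact (edist_lt_top _ _).ne)
  have hfix : g a = a := by
    have := ha.1
    exact congrArg Subtype.val this
  have hAFa : A (F a) = 0 := by
    have : (a : X) - A (F (a : X)) = a := hfix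
    have := sub_eq_self.mp this
    exact this
  have hFa : F (a : X) = 0 := hAinj (by simpa using hAFa)
  refine ⟨a, ⟨a.2, hFa⟩, ?_⟩
  intro b ⟨hb, hFb⟩
  have hgb : g b = b := by simp [hg, hFb]
  have h := hlip a a.2 b hb
  rw [hgb, hfix] at h
  have : ‖b - (a : X)‖ = 0 := by nlinarith [norm_nonneg (b - (a : X))]
  have := sub_eq_zero.mp (norm_eq_zero.mp this)
  exact this
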